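/- Let λ₁, λ₂ > 0, ρ > 0, β ∈ (0,1), and p ∈ [0,1]. Let X₁ ~ Exp(λ₁) and X₂ ~ Exp(λ₂) be independent, and let E be an event independent of (X₁, X₂) with P(E) = p. Define the random sum rate C = log₂(1 + β·M/((1−β)M + 1/ρ)) + log₂(1 + ρ(1−β)·W), where M = min(X₁, X₂), and W = X₁ on Eᶜ and W = X₂ on E. Then E[C] = (1−p)·φ′(λ₁, ρ(1−β)) + p·φ′(λ₂, ρ(1−β)) + φ(λ₁, ρ) + φ(λ₂, ρ) − φ(λ₁, ρ(1−β)) − φ(λ₂, ρ(1−β)), where φ′(l, φ₀) = (φ₀/ln 2)·∫₀^∞ e^{−l t}/(1 + φ₀ t) dt and φ(l, φ₀) = (l/((λ₁+λ₂) ln 2))·φ₀·∫₀^∞ e^{−(λ₁+λ₂) t}/(1 + φ₀ t) dt. -/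

import Mathlib

open MeasureTheory ProbabilityTheory Real Set
open scoped Classical
open Filter
open scoped Topology NNReal ENNReal

/-- `φ′(l, φ₀) = (φ₀/ln 2) ∫₀^∞ e^{-lt}/(1 + φ₀ t) dt`. -/
noncomputable def phiPrime (l φ₀ : ℝ) : ℝ :=
  (φ₀ / Real.log 2) * ∫ t in Set.Ioi (0 : ℝ), Real.exp (-l * t) / (1 + φ₀ * t)

/-- `φ(l, φ₀) = (l/((l₁+l₂) ln 2)) φ₀ ∫₀^∞ e^{-(l₁+l₂)t}/(1 + φ₀ t) dt`. -/
noncomputable def phiFun (l₁ l₂ l φ₀ : ℝ) : ℝ :=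
  (l / ((l₁ + l₂) * Real.log 2)) * φ₀ *
    ∫ t in Set.Ioi (0 : ℝ), Real.exp (-(l₁ + l₂) * t) / (1 + φ₀ * t)

lemma tendsto_mul_exp_zero {s : ℝ} (hs : 0 < s) :
    Tendsto (fun t : ℝ => t * Real.exp (-s * t)) atTop (𝓝 0) := by
  have h1 : Tendsto (fun t : ℝ => s * t) atTop atTop :=
    Tendsto.const_mul_atTop hs tendsto_id
  have h2 := (tendsto_pow_mul_exp_neg_atTop_nhds_zero 1).comp h1
  have h3 := h2.const_mul (1 / s)
  rw [mul_zero] at h3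
  refine h3.congr fun t => ?_
  simp only [Function.comp_apply, pow_one]
  field_simp

lemma integrableOn_exp_frac {s c : ℝ} (hs : 0 < s) (hc : 0 ≤ c) :
    IntegrableOn (fun t : ℝ => Real.exp (-s * t) / (1 + c * t)) (Set.Ioi 0) := by
  refine Integrable.mono' (exp_neg_integrableOn_Ioi 0 hs) ?_ ?_
  · exact ((Real.measurable_exp.comp (measurable_id.const_mul (-s))).div
      ((measurable_id.const_mul c).const_add 1)).aestronglyMeasurable
  · filter_upwards [ae_restrict_mem measurableSet_Ioi] with t ht
    have h1 : (1:ℝ) ≤ 1 + c * t := le_add_of_nonneg_right (mul_nonneg hc (le_of_lt ht))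
    rw [Real.norm_eq_abs, abs_div, abs_of_nonneg (Real.exp_pos _).le,
      abs_of_pos (lt_of_lt_of_le one_pos h1)]
    exact div_le_self (Real.exp_pos _).le h1

lemma integrableOn_mul_exp {s : ℝ} (hs : 0 < s) :
    IntegrableOn (fun t : ℝ => t * Real.exp (-s * t)) (Set.Ioi 0) := by
  refine integrable_of_isBigO_exp_neg (half_pos hs) ?_ ?_
  · exact (continuous_id.mul ((continuous_const.mul continuous_id : Continuous fun t:ℝ => (-s)*t).rexp)).continuousOn
  · have heq : (fun t : ℝ => t * Real.exp (-s * t)) =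
        fun t => (t * Real.exp (-(s/2) * t)) * Real.exp (-(s/2) * t) := by
      funext t
      rw [mul_assoc, ← Real.exp_add]
      ring_nf
    rw [heq]
    exact ((tendsto_mul_exp_zero (half_pos hs)).isBigO_one ℝ).mul
      (Asymptotics.isBigO_refl _ _) |>.trans (by simp [Asymptotics.isBigO_refl])

lemma log_le_lin {c t : ℝ} (hc : 0 ≤ c) (ht : 0 ≤ t) : Real.log (1 + c * t) ≤ c * t := by
  have := Real.log_le_sub_one_of_pos (show (0:ℝ) < 1 + c*t by positivity)
  linarith

lemma integrableOn_log_exp {s c : ℝ} (hs : 0 < s) (hc : 0 ≤ c) :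
    IntegrableOn (fun t : ℝ => Real.log (1 + c * t) * Real.exp (-s * t)) (Set.Ioi 0) := by
  refine Integrable.mono' ((integrableOn_mul_exp hs).const_mul c) ?_ ?_
  · exact ((Real.measurable_log.comp ((measurable_id.const_mul c).const_add 1)).mul
      (Real.measurable_exp.comp (measurable_id.const_mul (-s)))).aestronglyMeasurable
  · filter_upwards [ae_restrict_mem measurableSet_Ioi] with t ht
    have h1 : (1:ℝ) ≤ 1 + c * t := le_add_of_nonneg_right (mul_nonneg hc ht.le)
    have hlog : 0 ≤ Real.log (1 + c * t) := Real.log_nonneg h1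
    rw [Real.norm_eq_abs, abs_mul, abs_of_nonneg hlog, abs_of_nonneg (Real.exp_pos _).le]
    have := log_le_lin hc ht.le
    calc Real.log (1 + c*t) * Real.exp (-s*t) ≤ (c*t) * Real.exp (-s*t) :=
          mul_le_mul_of_nonneg_right this (Real.exp_pos _).le
      _ = c * (t * Real.exp (-s*t)) := by ring

lemma tendsto_log_mul_exp_zero {s c : ℝ} (hs : 0 < s) (hc : 0 ≤ c) :
    Tendsto (fun t : ℝ => Real.log (1 + c * t) * Real.exp (-s * t)) atTop (𝓝 0) := by
  have hb := (tendsto_mul_exp_zero hs).const_mul c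
  rw [mul_zero] at hb
  refine squeeze_zero_norm' ?_ hb
  filter_upwards [eventually_ge_atTop (0:ℝ)] with t ht
  have h1 : (1:ℝ) ≤ 1 + c * t := le_add_of_nonneg_right (mul_nonneg hc ht)
  rw [Real.norm_eq_abs, abs_mul, abs_of_nonneg (Real.log_nonneg h1),
    abs_of_nonneg (Real.exp_pos _).le]
  calc Real.log (1 + c*t) * Real.exp (-s*t) ≤ (c*t) * Real.exp (-s*t) :=
        mul_le_mul_of_nonneg_right (log_le_lin hc ht) (Real.exp_pos _).le
    _ = c * (t * Real.exp (-s*t)) := by ring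

/-- Integration by parts identity. -/
lemma ibp {s c : ℝ} (hs : 0 < s) (hc : 0 ≤ c) :
    ∫ t in Set.Ioi (0:ℝ), Real.log (1 + c * t) * (s * Real.exp (-s * t)) =
      c * ∫ t in Set.Ioi (0:ℝ), Real.exp (-s * t) / (1 + c * t) := by
  set F : ℝ → ℝ := fun t => -(Real.log (1 + c * t) * Real.exp (-s * t)) with hF
  set F' : ℝ → ℝ := fun t =>
    Real.log (1 + c * t) * (s * Real.exp (-s * t)) - c * (Real.exp (-s * t) / (1 + c * t)) with hF'
  have hderiv : ∀ t ∈ Set.Ici (0:ℝ), HasDerivAt F (F' t) t := by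
    intro t ht
    have hpos : (0:ℝ) < 1 + c * t := by
      have : 0 ≤ c * t := mul_nonneg hc ht
      linarith
    have h1 : HasDerivAt (fun t : ℝ => 1 + c * t) c t := by
      simpa using ((hasDerivAt_id t).const_mul c).const_add 1
    have h2 : HasDerivAt (fun t : ℝ => Real.log (1 + c * t)) (c / (1 + c * t)) t :=
      h1.log hpos.ne'
    have h3 : HasDerivAt (fun t : ℝ => Real.exp (-s * t)) (-s * Real.exp (-s * t)) t := by
      simpa [mul_comm] using ((hasDerivAt_id t).const_mul (-s)).exp
    have := (h2.mul h3).neg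
    refine this.congr_deriv ?_
    simp only [hF']
    field_simp
    ring
  have hint : IntegrableOn F' (Set.Ioi 0) :=
    ((integrableOn_log_exp hs hc).const_mul s).congr
      (Filter.Eventually.of_forall fun t => by ring) |>.sub
      ((integrableOn_exp_frac hs hc).const_mul c)
  have htend : Tendsto F atTop (𝓝 0) := by
    simpa [hF] using (tendsto_log_mul_exp_zero hs hc).neg
  have key := integral_Ioi_of_hasDerivAt_of_tendsto' hderiv hint htend
  have hF0 : F 0 = 0 := by simp [hF]
  rw [hF0, sub_zero] at key
  have hsplit : ∫ t in Set.Ioi (0:ℝ), F' t =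
      (∫ t in Set.Ioi (0:ℝ), Real.log (1 + c * t) * (s * Real.exp (-s * t))) -
      c * ∫ t in Set.Ioi (0:ℝ), Real.exp (-s * t) / (1 + c * t) := by
    rw [integral_sub (((integrableOn_log_exp hs hc).const_mul s).congr
      (Filter.Eventually.of_forall fun t => by ring)) ((integrableOn_exp_frac hs hc).const_mul c),
      integral_const_mul]
  rw [hsplit] at key
  linarith


lemma expMeasure_eq_withDensity (r : ℝ) :
    expMeasure r = volume.withDensity
      (fun x => ((Real.toNNReal (exponentialPDFReal r x) : ℝ≥0) : ℝ≥0∞)) := rfl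

lemma pdf_smul_eq (r c : ℝ) (hr : 0 < r) :
    ∀ x : ℝ, (Real.toNNReal (exponentialPDFReal r x)) • Real.log (1 + c * x) =
      exponentialPDFReal r x * Real.log (1 + c * x) := by
  intro x
  rw [NNReal.smul_def, Real.coe_toNNReal _ (exponentialPDFReal_nonneg hr x), smul_eq_mul]

lemma integrable_pdf_smul_log {r c : ℝ} (hr : 0 < r) (hc : 0 ≤ c) :
    Integrable (fun x => exponentialPDFReal r x * Real.log (1 + c * x)) := by
  have hIic : IntegrableOn (fun x => exponentialPDFReal r x * Real.log (1 + c * x)) (Iic 0) := by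
    have hz : IntegrableOn (fun _ : ℝ => (0:ℝ)) (Iic 0) (volume : Measure ℝ) := integrableOn_zero
    refine hz.congr_fun (fun x hx => ?_) measurableSet_Iic
    rcases lt_or_eq_of_le (show x ≤ 0 from hx) with h | h
    · simp [exponentialPDFReal, gammaPDFReal, not_le.mpr h]
    · subst h; simp
  have hIoi : IntegrableOn (fun x => exponentialPDFReal r x * Real.log (1 + c * x)) (Ioi 0) := by
    have hbase : IntegrableOn (fun x => r * (Real.log (1 + c * x) * Real.exp (-r * x))) (Ioi 0)
      (volume : Measure ℝ) := (integrableOn_log_exp hr hc).const_mul r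
    refine hbase.congr_fun (fun x hx => ?_) measurableSet_Ioi
    simp only [exponentialPDFReal, gammaPDFReal, if_pos (le_of_lt (mem_Ioi.mp hx))]
    rw [Real.Gamma_one]
    simp [pow_one]
    ring
  have := hIic.union hIoi
  rwa [Iic_union_Ioi, integrableOn_univ] at this

lemma integrable_log_expMeasure {r c : ℝ} (hr : 0 < r) (hc : 0 ≤ c) :
    Integrable (fun x => Real.log (1 + c * x)) (expMeasure r) := by
  rw [expMeasure_eq_withDensity,
    integrable_withDensity_iff_integrable_smul
      ((measurable_exponentialPDFReal r).real_toNNReal)]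
  exact (integrable_pdf_smul_log hr hc).congr
    (Filter.Eventually.of_forall fun x => (pdf_smul_eq r c hr x).symm)

lemma integral_log_expMeasure {r c : ℝ} (hr : 0 < r) (hc : 0 ≤ c) :
    ∫ x, Real.log (1 + c * x) ∂(expMeasure r) =
      c * ∫ t in Set.Ioi (0:ℝ), Real.exp (-r * t) / (1 + c * t) := by
  rw [expMeasure_eq_withDensity,
    integral_withDensity_eq_integral_smul ((measurable_exponentialPDFReal r).real_toNNReal)]
  have h1 : ∫ x, (Real.toNNReal (exponentialPDFReal r x)) • Real.log (1 + c * x) =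
      ∫ x, exponentialPDFReal r x * Real.log (1 + c * x) :=
    integral_congr_ae (Filter.Eventually.of_forall (pdf_smul_eq r c hr))
  rw [h1, ← intervalIntegral.integral_Iic_add_Ioi (b := (0:ℝ))
    (integrable_pdf_smul_log hr hc).integrableOn (integrable_pdf_smul_log hr hc).integrableOn]
  have h2 : ∫ x in Iic (0:ℝ), exponentialPDFReal r x * Real.log (1 + c * x) = 0 := by
    rw [setIntegral_congr_fun measurableSet_Iic (g := fun _ => (0:ℝ)) ?_, integral_zero]
    intro x hx
    rcases lt_or_eq_of_le (show x ≤ 0 from hx) with h | h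
    · simp [exponentialPDFReal, gammaPDFReal, not_le.mpr h]
    · subst h; simp
  have h3 : ∫ x in Ioi (0:ℝ), exponentialPDFReal r x * Real.log (1 + c * x) =
      ∫ x in Ioi (0:ℝ), Real.log (1 + c * x) * (r * Real.exp (-r * x)) := by
    refine setIntegral_congr_fun measurableSet_Ioi fun x hx => ?_
    simp only [exponentialPDFReal, gammaPDFReal, if_pos (le_of_lt (mem_Ioi.mp hx))]
    rw [Real.Gamma_one]
    simp [pow_one]
    ring
  rw [h2, h3, zero_add, ibp hr hc]


lemma measurable_logb_affine (d : ℝ) : Measurable (fun x : ℝ => Real.logb 2 (1 + d * x)) := by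
  simp only [Real.logb]
  exact (Real.measurable_log.comp (measurable_const.add (measurable_id.const_mul d))).div_const _

lemma integrable_logb_expMeasure {r d : ℝ} (hr : 0 < r) (hd : 0 ≤ d) :
    Integrable (fun x => Real.logb 2 (1 + d * x)) (expMeasure r) := by
  simp only [Real.logb]
  exact (integrable_log_expMeasure hr hd).div_const _

lemma integral_logb_expMeasure {r d : ℝ} (hr : 0 < r) (hd : 0 ≤ d) :
    ∫ x, Real.logb 2 (1 + d * x) ∂(expMeasure r) = phiPrime r d := by
  simp only [Real.logb]
  rw [integral_div, integral_log_expMeasure hr hd, phiPrime]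
  ring

lemma expMeasure_Iio_zero (r : ℝ) : expMeasure r (Iio 0) = 0 := by
  rw [expMeasure, gammaMeasure, withDensity_apply _ measurableSet_Iio]
  rw [setLIntegral_congr_fun measurableSet_Iio
    (fun x (hx : x < 0) => gammaPDF_of_neg hx)]
  simp

lemma expMeasure_Iic_eq {r : ℝ} (hr : 0 < r) (x : ℝ) :
    expMeasure r (Iic x) = ENNReal.ofReal (if 0 ≤ x then 1 - Real.exp (-(r * x)) else 0) := by
  have : IsProbabilityMeasure (expMeasure r) := isProbabilityMeasure_expMeasure hr
  rw [← ofReal_cdf (expMeasure r) x]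
  congr 1
  have h := cdf_expMeasure_eq hr x
  rw [h]

lemma expMeasure_Ioi_eq {r : ℝ} (hr : 0 < r) (x : ℝ) :
    expMeasure r (Ioi x) = ENNReal.ofReal (Real.exp (-(r * max x 0))) := by
  have : IsProbabilityMeasure (expMeasure r) := isProbabilityMeasure_expMeasure hr
  have h : expMeasure r (Ioi x) = 1 - expMeasure r (Iic x) := by
    rw [← compl_Iic]
    exact prob_compl_eq_one_sub measurableSet_Iic
  rw [h, expMeasure_Iic_eq hr]
  by_cases hx : 0 ≤ x
  · rw [if_pos hx, max_eq_left hx]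
    have he : Real.exp (-(r * x)) ≤ 1 :=
      Real.exp_le_one_iff.mpr (neg_nonpos.mpr (by positivity))
    rw [show (1 : ℝ≥0∞) = ENNReal.ofReal 1 from ENNReal.ofReal_one.symm,
      ← ENNReal.ofReal_sub 1 (show (0:ℝ) ≤ 1 - Real.exp (-(r*x)) by linarith)]
    norm_num
  · rw [if_neg hx, max_eq_right (le_of_not_ge hx)]
    simp

lemma map_min_law {Ω : Type*} [MeasurableSpace Ω] (P : Measure Ω) [IsProbabilityMeasure P]
    {l₁ l₂ : ℝ} (hl₁ : 0 < l₁) (hl₂ : 0 < l₂)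
    {X₁ X₂ : Ω → ℝ} (hm1 : Measurable X₁) (hm2 : Measurable X₂)
    (hlaw1 : P.map X₁ = expMeasure l₁) (hlaw2 : P.map X₂ = expMeasure l₂)
    (hind : IndepFun X₁ X₂ P) :
    P.map (fun ω => min (X₁ ω) (X₂ ω)) = expMeasure (l₁ + l₂) := by
  have hm : Measurable fun ω => min (X₁ ω) (X₂ ω) := hm1.min hm2
  have hl : 0 < l₁ + l₂ := by linarith
  have i1 : IsProbabilityMeasure (P.map fun ω => min (X₁ ω) (X₂ ω)) :=
    Measure.isProbabilityMeasure_map hm.aemeasurable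
  have i2 : IsProbabilityMeasure (expMeasure (l₁ + l₂)) := isProbabilityMeasure_expMeasure hl
  have hIoi : ∀ x : ℝ, (P.map fun ω => min (X₁ ω) (X₂ ω)) (Ioi x) =
      expMeasure (l₁ + l₂) (Ioi x) := by
    intro x
    rw [Measure.map_apply hm measurableSet_Ioi]
    have hpre : (fun ω => min (X₁ ω) (X₂ ω)) ⁻¹' (Ioi x) =
        X₁ ⁻¹' (Ioi x) ∩ X₂ ⁻¹' (Ioi x) := by
      ext ω; simp [lt_min_iff]
    rw [hpre, hind.measure_inter_preimage_eq_mul _ _ measurableSet_Ioi measurableSet_Ioi,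
      ← Measure.map_apply hm1 measurableSet_Ioi, ← Measure.map_apply hm2 measurableSet_Ioi,
      hlaw1, hlaw2, expMeasure_Ioi_eq hl₁, expMeasure_Ioi_eq hl₂, expMeasure_Ioi_eq hl,
      ← ENNReal.ofReal_mul (Real.exp_pos _).le, ← Real.exp_add]
    congr 2
    ring
  refine Measure.ext_of_Iic _ _ fun x => ?_
  have e1 : (P.map fun ω => min (X₁ ω) (X₂ ω)) (Iic x) =
      1 - (P.map fun ω => min (X₁ ω) (X₂ ω)) (Ioi x) := by
    rw [← compl_Ioi]; exact prob_compl_eq_one_sub measurableSet_Ioi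
  have e2 : expMeasure (l₁ + l₂) (Iic x) = 1 - expMeasure (l₁ + l₂) (Ioi x) := by
    rw [← compl_Ioi]; exact prob_compl_eq_one_sub measurableSet_Ioi
  rw [e1, e2, hIoi]

lemma map_restrict_eq {Ω : Type*} [MeasurableSpace Ω] (P : Measure Ω) (S : Set Ω)
    (X : Ω → ℝ) (hmX : Measurable X)
    (hkey : ∀ B : Set ℝ, MeasurableSet B → P (X ⁻¹' B ∩ S) = P S * P (X ⁻¹' B)) :
    (P.restrict S).map X = P S • P.map X := by
  refine Measure.ext fun s hs => ?_
  rw [Measure.map_apply hmX hs, Measure.restrict_apply (hmX hs), Measure.smul_apply,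
    Measure.map_apply hmX hs, hkey s hs, smul_eq_mul]


theorem downlink_noma_average_sum_rate
    {Ω : Type*} [MeasurableSpace Ω] (P : Measure Ω) [IsProbabilityMeasure P]
    (l₁ l₂ ρ β p : ℝ) (hl₁ : 0 < l₁) (hl₂ : 0 < l₂) (hρ : 0 < ρ)
    (hβ : β ∈ Set.Ioo (0 : ℝ) 1) (hp : p ∈ Set.Icc (0 : ℝ) 1)
    (X₁ X₂ : Ω → ℝ) (hm1 : Measurable X₁) (hm2 : Measurable X₂)
    (hlaw1 : P.map X₁ = expMeasure l₁) (hlaw2 : P.map X₂ = expMeasure l₂)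
    (hind : IndepFun X₁ X₂ P)
    (E : Set Ω) (hE : MeasurableSet E) (hPE : (P E).toReal = p)
    (hindE : Indep (MeasurableSpace.generateFrom {E})
      (MeasurableSpace.comap (fun ω => (X₁ ω, X₂ ω)) inferInstance) P) :
    ∫ ω, (Real.logb 2 (1 + β * min (X₁ ω) (X₂ ω) /
            ((1 - β) * min (X₁ ω) (X₂ ω) + 1 / ρ)) +
          Real.logb 2 (1 + ρ * (1 - β) * (if ω ∈ E then X₂ ω else X₁ ω))) ∂P =
      (1 - p) * phiPrime l₁ (ρ * (1 - β)) + p * phiPrime l₂ (ρ * (1 - β)) +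
      phiFun l₁ l₂ l₁ ρ + phiFun l₁ l₂ l₂ ρ -
      phiFun l₁ l₂ l₁ (ρ * (1 - β)) - phiFun l₁ l₂ l₂ (ρ * (1 - β)) := by
  obtain ⟨hβ0, hβ1⟩ := hβ
  have hc0 : 0 < ρ * (1 - β) := by nlinarith
  set c := ρ * (1 - β) with hcdef
  have hl12 : 0 < l₁ + l₂ := by linarith
  have hmmin : Measurable fun ω => min (X₁ ω) (X₂ ω) := hm1.min hm2
  have hmap_min := map_min_law P hl₁ hl₂ hm1 hm2 hlaw1 hlaw2 hind
  have hae : ∀ (X : Ω → ℝ), Measurable X → ∀ (r : ℝ), P.map X = expMeasure r →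
      ∀ᵐ ω ∂P, 0 ≤ X ω := by
    intro X hX r hlaw
    have h0 : P (X ⁻¹' (Iio 0)) = 0 := by
      rw [← Measure.map_apply hX measurableSet_Iio, hlaw, expMeasure_Iio_zero]
    rw [ae_iff]
    simp only [not_le]
    exact h0
  have hae1 := hae X₁ hm1 l₁ hlaw1
  have hae2 := hae X₂ hm2 l₂ hlaw2
  have hIndep := (ProbabilityTheory.Indep_iff _ _ _).1 hindE
  have hEmem : MeasurableSet[MeasurableSpace.generateFrom {E}] E :=
    MeasurableSpace.measurableSet_generateFrom rfl
  have hkey2 : ∀ B : Set ℝ, MeasurableSet B → P (X₂ ⁻¹' B ∩ E) = P E * P (X₂ ⁻¹' B) := by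
    intro B hB
    have hmem : MeasurableSet[MeasurableSpace.comap (fun ω => (X₁ ω, X₂ ω)) inferInstance]
        (X₂ ⁻¹' B) := ⟨(univ : Set ℝ) ×ˢ B, MeasurableSet.univ.prod hB, by ext ω; simp⟩
    rw [inter_comm]
    exact hIndep E (X₂ ⁻¹' B) hEmem hmem
  have hkey1 : ∀ B : Set ℝ, MeasurableSet B → P (X₁ ⁻¹' B ∩ Eᶜ) = P Eᶜ * P (X₁ ⁻¹' B) := by
    intro B hB
    have hmem : MeasurableSet[MeasurableSpace.comap (fun ω => (X₁ ω, X₂ ω)) inferInstance]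
        (X₁ ⁻¹' B) := ⟨B ×ˢ (univ : Set ℝ), hB.prod MeasurableSet.univ, by ext ω; simp⟩
    rw [inter_comm]
    exact hIndep Eᶜ (X₁ ⁻¹' B) hEmem.compl hmem
  have hres2 : (P.restrict E).map X₂ = P E • expMeasure l₂ := by
    rw [map_restrict_eq P E X₂ hm2 hkey2, hlaw2]
  have hres1 : (P.restrict Eᶜ).map X₁ = P Eᶜ • expMeasure l₁ := by
    rw [map_restrict_eq P Eᶜ X₁ hm1 hkey1, hlaw1]
  have hPEc : (P Eᶜ).toReal = 1 - p := by
    rw [prob_compl_eq_one_sub hE, ENNReal.toReal_sub_of_le prob_le_one ENNReal.one_ne_top,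
      ENNReal.toReal_one, hPE]
  have hIntComp : ∀ (Y : Ω → ℝ), Measurable Y → ∀ (r d : ℝ), 0 < r → 0 ≤ d →
      P.map Y = expMeasure r → Integrable (fun ω => Real.logb 2 (1 + d * Y ω)) P := by
    intro Y hY r d hr hd hlaw
    have := (integrable_map_measure ((measurable_logb_affine d)).aestronglyMeasurable
      hY.aemeasurable).mp (hlaw ▸ integrable_logb_expMeasure hr hd)
    exact this
  have hIntA := hIntComp _ hmmin (l₁+l₂) ρ hl12 hρ.le hmap_min
  have hIntB := hIntComp _ hmmin (l₁+l₂) c hl12 hc0.le hmap_min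
  have hIntW1 := hIntComp _ hm1 l₁ c hl₁ hc0.le hlaw1
  have hIntW2 := hIntComp _ hm2 l₂ c hl₂ hc0.le hlaw2
  have hI1 : Integrable (E.indicator (fun ω => Real.logb 2 (1 + c * X₂ ω))) P :=
    hIntW2.indicator hE
  have hI2 : Integrable (Eᶜ.indicator (fun ω => Real.logb 2 (1 + c * X₁ ω))) P :=
    hIntW1.indicator hE.compl
  have hrw : ∀ᵐ ω ∂P, (Real.logb 2 (1 + β * min (X₁ ω) (X₂ ω) /
            ((1 - β) * min (X₁ ω) (X₂ ω) + 1 / ρ)) +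
          Real.logb 2 (1 + c * (if ω ∈ E then X₂ ω else X₁ ω))) =
      (Real.logb 2 (1 + ρ * min (X₁ ω) (X₂ ω)) - Real.logb 2 (1 + c * min (X₁ ω) (X₂ ω))
        + (E.indicator (fun ω => Real.logb 2 (1 + c * X₂ ω)) ω
          + Eᶜ.indicator (fun ω => Real.logb 2 (1 + c * X₁ ω)) ω)) := by
    filter_upwards [hae1, hae2] with ω h1 h2
    have hm0 : 0 ≤ min (X₁ ω) (X₂ ω) := le_min h1 h2
    set m := min (X₁ ω) (X₂ ω) with hm
    have hinv : 0 < 1 / ρ := one_div_pos.mpr hρ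
    have hbm : 0 ≤ (1 - β) * m := mul_nonneg (by linarith) hm0
    have hden : 0 < (1 - β) * m + 1 / ρ := by linarith
    have hp1 : (0:ℝ) < 1 + ρ * m := by nlinarith [mul_nonneg hρ.le hm0]
    have hp2 : (0:ℝ) < 1 + c * m := by nlinarith [mul_nonneg hc0.le hm0]
    have hterm1 : 1 + β * m / ((1 - β) * m + 1 / ρ) = (1 + ρ * m) / (1 + c * m) := by
      rw [hcdef] at hp2 ⊢
      rw [eq_div_iff hp2.ne']
      field_simp
      ring
    rw [hterm1, Real.logb_div hp1.ne' hp2.ne']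
    by_cases hω : ω ∈ E
    · rw [if_pos hω, Set.indicator_of_mem hω, Set.indicator_of_notMem (by simp [hω])]
      ring
    · rw [if_neg hω, Set.indicator_of_notMem hω, Set.indicator_of_mem (by simp [hω])]
      ring
  rw [integral_congr_ae hrw]
  have hstep1 := integral_add (μ := P) (hIntA.sub hIntB) (hI1.add hI2)
  simp only [Pi.add_apply, Pi.sub_apply] at hstep1
  rw [hstep1, integral_sub hIntA hIntB]
  have hstep2 := integral_add (μ := P) hI1 hI2
  rw [hstep2, integral_indicator hE, integral_indicator hE.compl]
  have hA : ∫ ω, Real.logb 2 (1 + ρ * min (X₁ ω) (X₂ ω)) ∂P = phiPrime (l₁+l₂) ρ := by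
    rw [← integral_logb_expMeasure hl12 hρ.le, ← hmap_min,
      integral_map hmmin.aemeasurable (measurable_logb_affine ρ).aestronglyMeasurable]
  have hB : ∫ ω, Real.logb 2 (1 + c * min (X₁ ω) (X₂ ω)) ∂P = phiPrime (l₁+l₂) c := by
    rw [← integral_logb_expMeasure hl12 hc0.le, ← hmap_min,
      integral_map hmmin.aemeasurable (measurable_logb_affine c).aestronglyMeasurable]
  have hW2 : ∫ ω in E, Real.logb 2 (1 + c * X₂ ω) ∂P = p * phiPrime l₂ c := by
    have h := integral_map (μ := P.restrict E) hm2.aemeasurable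
      (measurable_logb_affine c).aestronglyMeasurable (f := fun x => Real.logb 2 (1 + c * x))
    rw [← h, hres2, integral_smul_measure, integral_logb_expMeasure hl₂ hc0.le, hPE,
      smul_eq_mul]
  have hW1 : ∫ ω in Eᶜ, Real.logb 2 (1 + c * X₁ ω) ∂P = (1 - p) * phiPrime l₁ c := by
    have h := integral_map (μ := P.restrict Eᶜ) hm1.aemeasurable
      (measurable_logb_affine c).aestronglyMeasurable (f := fun x => Real.logb 2 (1 + c * x))
    rw [← h, hres1, integral_smul_measure, integral_logb_expMeasure hl₁ hc0.le, hPEc,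
      smul_eq_mul]
  rw [hA, hB, hW2, hW1]
  have hL2 : Real.log 2 ≠ 0 := ne_of_gt (Real.log_pos (by norm_num))
  have hsum : ∀ d : ℝ, phiFun l₁ l₂ l₁ d + phiFun l₁ l₂ l₂ d = phiPrime (l₁+l₂) d := by
    intro d
    unfold phiFun phiPrime
    field_simp
  have h₁ := hsum ρ
  have h₂ := hsum c
  linarith
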